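/- If F : ℝ² → ℝ² is a C¹ map with det DF ≡ 1 and K : ℝ/ℤ → ℝ² is C¹ and 1-periodic, then the signed area functional is preserved under composition: A(F ∘ K) = A(K), where A(K) = (1/2)∫₀¹ (K₁ K₂' - K₂ K₁') dθ. -/

import Mathlib

open MeasureTheory intervalIntegral Filter Topology Metric
set_option maxHeartbeats 2000000

lemma clm_eval {W : Type*} [NormedAddCommGroup W] [NormedSpace ℝ W]
    (L : (ℝ×ℝ) →L[ℝ] W) (v : ℝ×ℝ) : L v = v.1 • L (1,0) + v.2 • L (0,1) := by
  have hv : v = v.1 • ((1:ℝ),(0:ℝ)) + v.2 • ((0:ℝ),(1:ℝ)) := by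
    simp [Prod.ext_iff]
  rw [show L v = L (v.1 • ((1:ℝ),(0:ℝ)) + v.2 • ((0:ℝ),(1:ℝ))) from by rw [← hv]]
  rw [map_add, _root_.map_smul, _root_.map_smul]

lemma det_formula (L : (ℝ×ℝ) →L[ℝ] (ℝ×ℝ)) :
    LinearMap.det (L : (ℝ×ℝ) →ₗ[ℝ] (ℝ×ℝ)) =
      (L (1,0)).1 * (L (0,1)).2 - (L (0,1)).1 * (L (1,0)).2 := by
  rw [← LinearMap.det_toMatrix (Module.Basis.finTwoProd ℝ), Matrix.det_fin_two]
  simp [LinearMap.toMatrix_apply, Module.Basis.finTwoProd]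

lemma one_le_inf : (1 : WithTop ℕ∞) ≤ ((⊤:ℕ∞):WithTop ℕ∞) := by exact_mod_cast le_top
lemma two_le_inf : (2 : WithTop ℕ∞) ≤ ((⊤:ℕ∞):WithTop ℕ∞) := by
  rw [show ((2:WithTop ℕ∞)) = (((2:ℕ∞)):WithTop ℕ∞) from rfl]
  exact WithTop.coe_le_coe.mpr le_top
lemma inf_add_one_le : ((⊤:ℕ∞):WithTop ℕ∞) + 1 ≤ ((⊤:ℕ∞):WithTop ℕ∞) := le_rfl
lemma one_le_inf' : (1 : ℕ∞) ≤ (⊤:ℕ∞) := le_top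

theorem green_trick (P Q : ℝ×ℝ → ℝ) (hP : ContDiff ℝ 1 P) (hQ : ContDiff ℝ 1 Q)
    (K : ℝ → ℝ × ℝ) (hK : ContDiff ℝ 1 K) (hper : ∀ θ : ℝ, K (θ + 1) = K θ) :
    (∫ θ in (0:ℝ)..1, (P (K θ) * deriv (fun t => (K t).1) θ
        + Q (K θ) * deriv (fun t => (K t).2) θ))
    = ∫ θ in (0:ℝ)..1,
        (∫ s in (0:ℝ)..1, s * (fderiv ℝ Q (s • K θ) (1,0) - fderiv ℝ P (s • K θ) (0,1)))
          * ((K θ).1 * deriv (fun t => (K t).2) θ - (K θ).2 * deriv (fun t => (K t).1) θ) := by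
  have hPd : Differentiable ℝ P := hP.differentiable one_ne_zero
  have hQd : Differentiable ℝ Q := hQ.differentiable one_ne_zero
  have hPc : Continuous P := hPd.continuous
  have hQc : Continuous Q := hQd.continuous
  have hPf : Continuous (fderiv ℝ P) := hP.continuous_fderiv one_ne_zero
  have hQf : Continuous (fderiv ℝ Q) := hQ.continuous_fderiv one_ne_zero
  have hKc : Continuous K := hK.continuous
  set c : ℝ×ℝ → ℝ := fun p => fderiv ℝ Q p (1,0) - fderiv ℝ P p (0,1) with hc
  have hccont : Continuous c :=
    (hQf.clm_apply continuous_const).sub (hPf.clm_apply continuous_const)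
  set Φ : (ℝ×ℝ) → ℝ → (ℝ×ℝ) →L[ℝ] ℝ := fun p s =>
    (P (s•p) • ContinuousLinearMap.fst ℝ ℝ ℝ + p.1 • (s • fderiv ℝ P (s•p))) +
    (Q (s•p) • ContinuousLinearMap.snd ℝ ℝ ℝ + p.2 • (s • fderiv ℝ Q (s•p))) with hΦdef
  have comp_smul_id : ∀ (L : (ℝ×ℝ) →L[ℝ] ℝ) (s : ℝ),
      L.comp (s • ContinuousLinearMap.id ℝ (ℝ×ℝ)) = s • L := by
    intro L s; ext v <;> simp
  have hΦ : ∀ (s : ℝ) (q : ℝ×ℝ),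
      HasFDerivAt (fun x => P (s•x) * x.1 + Q (s•x) * x.2) (Φ q s) q := by
    intro s q
    have h1 : HasFDerivAt (fun x : ℝ×ℝ => s • x) (s • ContinuousLinearMap.id ℝ (ℝ×ℝ)) q :=
      (s • ContinuousLinearMap.id ℝ (ℝ×ℝ)).hasFDerivAt
    have hPs : HasFDerivAt (fun x => P (s•x)) (s • fderiv ℝ P (s•q)) q := by
      have := (hPd (s•q)).hasFDerivAt.comp q h1
      rwa [comp_smul_id] at this
    have hQs : HasFDerivAt (fun x => Q (s•x)) (s • fderiv ℝ Q (s•q)) q := by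
      have := (hQd (s•q)).hasFDerivAt.comp q h1
      rwa [comp_smul_id] at this
    exact (hPs.mul hasFDerivAt_fst).add (hQs.mul hasFDerivAt_snd)
  have hΦcont : Continuous (fun z : (ℝ×ℝ)×ℝ => Φ z.1 z.2) := by
    apply Continuous.add
    · apply Continuous.add
      · exact ((hPc.comp (continuous_snd.smul continuous_fst)).smul continuous_const)
      · exact ((continuous_fst.fst).smul
          (continuous_snd.smul (hPf.comp (continuous_snd.smul continuous_fst))))
    · apply Continuous.add
      · exact ((hQc.comp (continuous_snd.smul continuous_fst)).smul continuous_const)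
      · exact ((continuous_fst.snd).smul
          (continuous_snd.smul (hQf.comp (continuous_snd.smul continuous_fst))))
  set h : ℝ×ℝ → ℝ := fun p => ∫ s in (0:ℝ)..1, (P (s•p) * p.1 + Q (s•p) * p.2) with hh
  have key : ∀ p : ℝ×ℝ, HasFDerivAt h (∫ s in (0:ℝ)..1, Φ p s) p := by
    intro p
    obtain ⟨C, hC⟩ := ((isCompact_closedBall p 1).prod (isCompact_Icc (a := (0:ℝ)) (b := 1))).exists_bound_of_continuousOn hΦcont.continuousOn
    apply intervalIntegral.hasFDerivAt_integral_of_dominated_of_fderiv_le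
      (F' := fun x s => Φ x s) (bound := fun _ => C) (s := ball p 1) (ball_mem_nhds p one_pos)
    · refine Eventually.of_forall fun x => Continuous.aestronglyMeasurable ?_
      exact ((hPc.comp (continuous_id.smul continuous_const)).mul continuous_const).add
        ((hQc.comp (continuous_id.smul continuous_const)).mul continuous_const)
    · apply Continuous.intervalIntegrable
      exact ((hPc.comp (continuous_id.smul continuous_const)).mul continuous_const).add
        ((hQc.comp (continuous_id.smul continuous_const)).mul continuous_const)
    · exact Continuous.aestronglyMeasurable
        (hΦcont.comp (continuous_const.prodMk continuous_id))
    · refine Eventually.of_forall fun s hs x hx => hC (x, s) ?_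
      refine Set.mk_mem_prod (ball_subset_closedBall hx) ?_
      rw [Set.uIoc_of_le (by norm_num : (0:ℝ) ≤ 1)] at hs
      exact Set.Ioc_subset_Icc_self hs
    · exact intervalIntegrable_const
    · exact Eventually.of_forall fun s _ x _ => hΦ s x
  set w : ℝ×ℝ → ℝ := fun p => ∫ s in (0:ℝ)..1, s * c (s • p) with hw
  have contP' : ∀ p : ℝ×ℝ, Continuous fun s : ℝ => P (s•p) + s * (fderiv ℝ P (s•p) p) :=
    fun p => (hPc.comp (continuous_id.smul continuous_const)).add
      (continuous_id.mul ((hPf.comp (continuous_id.smul continuous_const)).clm_apply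
        continuous_const))
  have contQ' : ∀ p : ℝ×ℝ, Continuous fun s : ℝ => Q (s•p) + s * (fderiv ℝ Q (s•p) p) :=
    fun p => (hQc.comp (continuous_id.smul continuous_const)).add
      (continuous_id.mul ((hQf.comp (continuous_id.smul continuous_const)).clm_apply
        continuous_const))
  have contc' : ∀ p : ℝ×ℝ, Continuous fun s : ℝ => s * c (s•p) :=
    fun p => continuous_id.mul (hccont.comp (continuous_id.smul continuous_const))
  have evalΦ : ∀ (p v : ℝ×ℝ), (∫ s in (0:ℝ)..1, Φ p s) v
      = P p * v.1 + Q p * v.2 + w p * (p.2*v.1 - p.1*v.2) := by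
    intro p v
    have hΦpc : Continuous fun s => Φ p s := hΦcont.comp (continuous_const.prodMk continuous_id)
    rw [ContinuousLinearMap.intervalIntegral_apply (hΦpc.intervalIntegrable 0 1)]
    have hpt : ∀ s : ℝ, Φ p s v
        = ((P (s•p) + s * (fderiv ℝ P (s•p) p)) * v.1
          + (Q (s•p) + s * (fderiv ℝ Q (s•p) p)) * v.2)
          + s * c (s•p) * (p.2*v.1 - p.1*v.2) := by
      intro s
      have e1 := clm_eval (fderiv ℝ P (s•p)) v
      have e2 := clm_eval (fderiv ℝ Q (s•p)) v
      have e3 := clm_eval (fderiv ℝ P (s•p)) p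
      have e4 := clm_eval (fderiv ℝ Q (s•p)) p
      simp only [hΦdef, ContinuousLinearMap.add_apply, ContinuousLinearMap.smul_apply,
        ContinuousLinearMap.coe_fst', ContinuousLinearMap.coe_snd', hc]
      rw [e1, e2, e3, e4]
      simp only [smul_eq_mul]
      ring
    have i1 : IntervalIntegrable
        (fun s => (P (s•p) + s * (fderiv ℝ P (s•p) p)) * v.1) volume 0 1 :=
      ((contP' p).mul continuous_const).intervalIntegrable _ _
    have i2 : IntervalIntegrable
        (fun s => (Q (s•p) + s * (fderiv ℝ Q (s•p) p)) * v.2) volume 0 1 :=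
      ((contQ' p).mul continuous_const).intervalIntegrable _ _
    have i3 : IntervalIntegrable
        (fun s => s * c (s•p) * (p.2*v.1 - p.1*v.2)) volume 0 1 :=
      ((contc' p).mul continuous_const).intervalIntegrable _ _
    have FTCP : (∫ s in (0:ℝ)..1, (P (s•p) + s * (fderiv ℝ P (s•p) p))) = P p := by
      have hder : ∀ s ∈ Set.uIcc (0:ℝ) 1, HasDerivAt (fun s : ℝ => s * P (s•p))
          (P (s•p) + s * (fderiv ℝ P (s•p) p)) s := by
        intro s _
        have hsp : HasDerivAt (fun s : ℝ => s • p) p s := by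
          simpa using (hasDerivAt_id s).smul_const p
        have hPp : HasDerivAt (fun s : ℝ => P (s•p)) (fderiv ℝ P (s•p) p) s :=
          (hPd (s•p)).hasFDerivAt.comp_hasDerivAt s hsp
        have := (hasDerivAt_id s).mul hPp
        simpa [add_comm, Pi.mul_def] using this
      have := intervalIntegral.integral_eq_sub_of_hasDerivAt hder
        ((contP' p).intervalIntegrable _ _)
      simpa using this
    have FTCQ : (∫ s in (0:ℝ)..1, (Q (s•p) + s * (fderiv ℝ Q (s•p) p))) = Q p := by
      have hder : ∀ s ∈ Set.uIcc (0:ℝ) 1, HasDerivAt (fun s : ℝ => s * Q (s•p))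
          (Q (s•p) + s * (fderiv ℝ Q (s•p) p)) s := by
        intro s _
        have hsp : HasDerivAt (fun s : ℝ => s • p) p s := by
          simpa using (hasDerivAt_id s).smul_const p
        have hQp : HasDerivAt (fun s : ℝ => Q (s•p)) (fderiv ℝ Q (s•p) p) s :=
          (hQd (s•p)).hasFDerivAt.comp_hasDerivAt s hsp
        have := (hasDerivAt_id s).mul hQp
        simpa [add_comm, Pi.mul_def] using this
      have := intervalIntegral.integral_eq_sub_of_hasDerivAt hder
        ((contQ' p).intervalIntegrable _ _)
      simpa using this
    calc (∫ s in (0:ℝ)..1, Φ p s v)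
        = ∫ s in (0:ℝ)..1, (((P (s•p) + s * (fderiv ℝ P (s•p) p)) * v.1
          + (Q (s•p) + s * (fderiv ℝ Q (s•p) p)) * v.2)
          + s * c (s•p) * (p.2*v.1 - p.1*v.2)) := by simp only [hpt]
      _ = P p * v.1 + Q p * v.2 + w p * (p.2*v.1 - p.1*v.2) := by
          rw [intervalIntegral.integral_add (i1.add i2) i3,
            intervalIntegral.integral_add i1 i2,
            intervalIntegral.integral_mul_const, intervalIntegral.integral_mul_const,
            intervalIntegral.integral_mul_const, FTCP, FTCQ]
  have hKder : ∀ θ, HasDerivAt K (deriv K θ) θ := fun θ => (hK.differentiable one_ne_zero θ).hasDerivAt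
  have e1 : ∀ θ, deriv (fun t => (K t).1) θ = (deriv K θ).1 := fun θ =>
    (((ContinuousLinearMap.fst ℝ ℝ ℝ).hasFDerivAt).comp_hasDerivAt θ (hKder θ)).deriv
  have e2 : ∀ θ, deriv (fun t => (K t).2) θ = (deriv K θ).2 := fun θ =>
    (((ContinuousLinearMap.snd ℝ ℝ ℝ).hasFDerivAt).comp_hasDerivAt θ (hKder θ)).deriv
  have hKdc : Continuous (deriv K) := hK.continuous_deriv le_rfl
  have hwKc : Continuous fun θ => w (K θ) := by
    apply intervalIntegral.continuous_parametric_intervalIntegral_of_continuous'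
    exact continuous_snd.mul (hccont.comp (continuous_snd.smul (hKc.comp continuous_fst)))
  have hcomp : ∀ θ : ℝ, HasDerivAt (fun t => h (K t))
      (P (K θ) * (deriv K θ).1 + Q (K θ) * (deriv K θ).2
        + w (K θ) * ((K θ).2 * (deriv K θ).1 - (K θ).1 * (deriv K θ).2)) θ := by
    intro θ
    have := (key (K θ)).comp_hasDerivAt θ (hKder θ)
    rwa [evalΦ] at this
  have hXc : Continuous fun θ => P (K θ) * (deriv K θ).1 + Q (K θ) * (deriv K θ).2 :=
    ((hPc.comp hKc).mul hKdc.fst).add ((hQc.comp hKc).mul hKdc.snd)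
  have hYc : Continuous fun θ =>
      w (K θ) * ((K θ).2 * (deriv K θ).1 - (K θ).1 * (deriv K θ).2) :=
    hwKc.mul ((hKc.snd.mul hKdc.fst).sub (hKc.fst.mul hKdc.snd))
  have FTC := intervalIntegral.integral_eq_sub_of_hasDerivAt
    (f := fun t => h (K t)) (fun θ _ => hcomp θ) ((hXc.add hYc).intervalIntegrable 0 1)
  have hK10 : K 1 = K 0 := by simpa using hper 0
  simp only [hK10, sub_self] at FTC
  rw [intervalIntegral.integral_add (hXc.intervalIntegrable 0 1)
    (hYc.intervalIntegrable 0 1)] at FTC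
  show _ = ∫ θ in (0:ℝ)..1, w (K θ) *
    ((K θ).1 * deriv (fun t => (K t).2) θ - (K θ).2 * deriv (fun t => (K t).1) θ)
  simp only [e1, e2]
  have hflip : (∫ θ in (0:ℝ)..1, w (K θ) * ((K θ).2 * (deriv K θ).1 - (K θ).1 * (deriv K θ).2))
      = - ∫ θ in (0:ℝ)..1, w (K θ) * ((K θ).1 * (deriv K θ).2 - (K θ).2 * (deriv K θ).1) := by
    rw [← intervalIntegral.integral_neg]
    congr 1; funext θ; ring
  linarith [FTC, hflip]

theorem smooth_green (G : ℝ×ℝ → ℝ×ℝ) (hG : ContDiff ℝ (⊤:ℕ∞) G)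
    (K : ℝ → ℝ×ℝ) (hK : ContDiff ℝ 1 K) (hper : ∀ θ : ℝ, K (θ+1) = K θ) :
    (∫ θ in (0:ℝ)..1, (1/2) * ((G (K θ)).1 * (fderiv ℝ G (K θ) (deriv K θ)).2
        - (G (K θ)).2 * (fderiv ℝ G (K θ) (deriv K θ)).1))
    = ∫ θ in (0:ℝ)..1,
        (∫ s in (0:ℝ)..1, s * ((fderiv ℝ G (s • K θ) (1,0)).1 * (fderiv ℝ G (s • K θ) (0,1)).2
            - (fderiv ℝ G (s • K θ) (0,1)).1 * (fderiv ℝ G (s • K θ) (1,0)).2))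
          * ((K θ).1 * (deriv K θ).2 - (K θ).2 * (deriv K θ).1) := by
  have hGd : Differentiable ℝ G := hG.differentiable (by simp)
  have hG1 : ContDiff ℝ (⊤:ℕ∞) (fderiv ℝ G) := hG.fderiv_right inf_add_one_le
  have hD2 : ∀ p, HasFDerivAt (fderiv ℝ G) (fderiv ℝ (fderiv ℝ G) p) p :=
    fun p => (hG1.differentiable (by simp) p).hasFDerivAt
  set P : ℝ×ℝ → ℝ := fun p =>
    (1/2) * ((G p).1 * (fderiv ℝ G p (1,0)).2 - (G p).2 * (fderiv ℝ G p (1,0)).1) with hPdef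
  set Q : ℝ×ℝ → ℝ := fun p =>
    (1/2) * ((G p).1 * (fderiv ℝ G p (0,1)).2 - (G p).2 * (fderiv ℝ G p (0,1)).1) with hQdef
  have hcd : ∀ u : ℝ×ℝ, ContDiff ℝ 1 fun p =>
      (G p).1 * (fderiv ℝ G p u).2 - (G p).2 * (fderiv ℝ G p u).1 := by
    intro u
    have hGe : ContDiff ℝ 1 fun p => fderiv ℝ G p u :=
      (hG1.of_le one_le_inf).clm_apply contDiff_const
    exact ((contDiff_fst.comp (hG.of_le one_le_inf)).mul (contDiff_snd.comp hGe)).sub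
      ((contDiff_snd.comp (hG.of_le one_le_inf)).mul (contDiff_fst.comp hGe))
  have hP : ContDiff ℝ 1 P := contDiff_const.mul (hcd (1,0))
  have hQ : ContDiff ℝ 1 Q := contDiff_const.mul (hcd (0,1))
  have hfd : ∀ (p v u : ℝ×ℝ),
      fderiv ℝ (fun q => (G q).1 * (fderiv ℝ G q u).2 - (G q).2 * (fderiv ℝ G q u).1) p v
      = ((fderiv ℝ G p v).1 * (fderiv ℝ G p u).2
          + (G p).1 * ((fderiv ℝ (fderiv ℝ G) p v) u).2)
        - ((fderiv ℝ G p v).2 * (fderiv ℝ G p u).1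
          + (G p).2 * ((fderiv ℝ (fderiv ℝ G) p v) u).1) := by
    intro p v u
    have h1 : HasFDerivAt (fun q => (G q).1)
        ((ContinuousLinearMap.fst ℝ ℝ ℝ).comp (fderiv ℝ G p)) p :=
      (ContinuousLinearMap.fst ℝ ℝ ℝ).hasFDerivAt.comp p (hGd p).hasFDerivAt
    have h2 : HasFDerivAt (fun q => (G q).2)
        ((ContinuousLinearMap.snd ℝ ℝ ℝ).comp (fderiv ℝ G p)) p :=
      (ContinuousLinearMap.snd ℝ ℝ ℝ).hasFDerivAt.comp p (hGd p).hasFDerivAt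
    have h3 : HasFDerivAt (fun q => fderiv ℝ G q u)
        ((fderiv ℝ (fderiv ℝ G) p).flip u) p := by
      have := (hD2 p).clm_apply (hasFDerivAt_const u p)
      simpa using this
    have h3a : HasFDerivAt (fun q => (fderiv ℝ G q u).2)
        ((ContinuousLinearMap.snd ℝ ℝ ℝ).comp ((fderiv ℝ (fderiv ℝ G) p).flip u)) p :=
      (ContinuousLinearMap.snd ℝ ℝ ℝ).hasFDerivAt.comp p h3
    have h3b : HasFDerivAt (fun q => (fderiv ℝ G q u).1)
        ((ContinuousLinearMap.fst ℝ ℝ ℝ).comp ((fderiv ℝ (fderiv ℝ G) p).flip u)) p :=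
      (ContinuousLinearMap.fst ℝ ℝ ℝ).hasFDerivAt.comp p h3
    have hmain := ((h1.mul h3a).sub (h2.mul h3b)).fderiv
    rw [show fderiv ℝ (fun q => (G q).1 * (fderiv ℝ G q u).2 - (G q).2 * (fderiv ℝ G q u).1) p
      = _ from hmain]
    simp [ContinuousLinearMap.sub_apply, ContinuousLinearMap.add_apply,
      ContinuousLinearMap.smul_apply, ContinuousLinearMap.comp_apply,
      ContinuousLinearMap.flip_apply, smul_eq_mul]
    ring
  have hc_eq : ∀ p : ℝ×ℝ, fderiv ℝ Q p (1,0) - fderiv ℝ P p (0,1)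
      = (fderiv ℝ G p (1,0)).1 * (fderiv ℝ G p (0,1)).2
        - (fderiv ℝ G p (0,1)).1 * (fderiv ℝ G p (1,0)).2 := by
    intro p
    have hsymm : ∀ v w : ℝ×ℝ, fderiv ℝ (fderiv ℝ G) p v w = fderiv ℝ (fderiv ℝ G) p w v :=
      hG.contDiffAt.isSymmSndFDerivAt (by rw [minSmoothness_of_isRCLikeNormedField]; exact two_le_inf)
    have dP : fderiv ℝ P p (0,1) = (1/2) *
        fderiv ℝ (fun q => (G q).1 * (fderiv ℝ G q (1,0)).2
          - (G q).2 * (fderiv ℝ G q (1,0)).1) p (0,1) := by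
      rw [hPdef]
      rw [fderiv_const_mul ((hcd (1,0)).differentiable one_ne_zero p)]
      simp
    have dQ : fderiv ℝ Q p (1,0) = (1/2) *
        fderiv ℝ (fun q => (G q).1 * (fderiv ℝ G q (0,1)).2
          - (G q).2 * (fderiv ℝ G q (0,1)).1) p (1,0) := by
      rw [hQdef]
      rw [fderiv_const_mul ((hcd (0,1)).differentiable one_ne_zero p)]
      simp
    rw [dP, dQ, hfd p (1,0) (0,1), hfd p (0,1) (1,0)]
    have hs := hsymm (1,0) (0,1)
    have hs1 : ((fderiv ℝ (fderiv ℝ G) p (1,0)) (0,1)).1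
        = ((fderiv ℝ (fderiv ℝ G) p (0,1)) (1,0)).1 := by rw [hs]
    have hs2 : ((fderiv ℝ (fderiv ℝ G) p (1,0)) (0,1)).2
        = ((fderiv ℝ (fderiv ℝ G) p (0,1)) (1,0)).2 := by rw [hs]
    rw [hs1, hs2]
    ring
  have hKder : ∀ θ, HasDerivAt K (deriv K θ) θ := fun θ => (hK.differentiable one_ne_zero θ).hasDerivAt
  have e1 : ∀ θ, deriv (fun t => (K t).1) θ = (deriv K θ).1 := fun θ =>
    (((ContinuousLinearMap.fst ℝ ℝ ℝ).hasFDerivAt).comp_hasDerivAt θ (hKder θ)).deriv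
  have e2 : ∀ θ, deriv (fun t => (K t).2) θ = (deriv K θ).2 := fun θ =>
    (((ContinuousLinearMap.snd ℝ ℝ ℝ).hasFDerivAt).comp_hasDerivAt θ (hKder θ)).deriv
  have GT := green_trick P Q hP hQ K hK hper
  have key1 : ∀ θ : ℝ, P (K θ) * deriv (fun t => (K t).1) θ + Q (K θ) * deriv (fun t => (K t).2) θ
      = (1/2) * ((G (K θ)).1 * (fderiv ℝ G (K θ) (deriv K θ)).2
        - (G (K θ)).2 * (fderiv ℝ G (K θ) (deriv K θ)).1) := by
    intro θ
    rw [e1, e2, clm_eval (fderiv ℝ G (K θ)) (deriv K θ), hPdef, hQdef]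
    simp only [Prod.fst_add, Prod.snd_add, Prod.smul_fst, Prod.smul_snd, smul_eq_mul]
    ring
  have l1 : (∫ θ in (0:ℝ)..1, (1/2) * ((G (K θ)).1 * (fderiv ℝ G (K θ) (deriv K θ)).2
        - (G (K θ)).2 * (fderiv ℝ G (K θ) (deriv K θ)).1))
      = ∫ θ in (0:ℝ)..1, (P (K θ) * deriv (fun t => (K t).1) θ
        + Q (K θ) * deriv (fun t => (K t).2) θ) :=
    intervalIntegral.integral_congr (fun θ _ => (key1 θ).symm)
  rw [l1, GT]
  apply intervalIntegral.integral_congr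
  intro θ _
  simp only [hc_eq, e1, e2]

lemma conv_norm_le {W : Type*} [NormedAddCommGroup W] [NormedSpace ℝ W]
    (φ : ContDiffBump (0 : ℝ×ℝ)) (g : ℝ×ℝ → W) (hg : AEStronglyMeasurable g volume)
    (C : ℝ) (hC : ∀ y, ‖g y‖ ≤ C) (x : ℝ×ℝ) :
    ‖(convolution (φ.normed volume) g (ContinuousLinearMap.lsmul ℝ ℝ) volume) x‖ ≤ C := by
  rw [convolution_def]
  have hint : Integrable (fun t => φ.normed volume t * C) volume :=
    φ.integrable_normed.mul_const C
  calc ‖∫ t, ContinuousLinearMap.lsmul ℝ ℝ (φ.normed volume t) (g (x - t))‖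
      ≤ ∫ t, φ.normed volume t * C := by
        apply MeasureTheory.norm_integral_le_of_norm_le hint
        filter_upwards with t
        simp only [ContinuousLinearMap.lsmul_apply, norm_smul, Real.norm_eq_abs,
          abs_of_nonneg (φ.nonneg_normed t)]
        exact mul_le_mul_of_nonneg_left (hC _) (φ.nonneg_normed t)
    _ = C := by rw [MeasureTheory.integral_mul_const, φ.integral_normed, one_mul]

lemma half_bound (a b c d C M : ℝ) (ha : ‖a‖ ≤ C) (hb : ‖b‖ ≤ M) (hc : ‖c‖ ≤ C)
    (hd : ‖d‖ ≤ M) (hC : 0 ≤ C) : ‖(1/2 : ℝ) * (a * b - c * d)‖ ≤ C * M := by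
  have m1 : ‖a*b‖ ≤ C * M := by rw [norm_mul]; exact mul_le_mul ha hb (norm_nonneg _) hC
  have m2 : ‖c*d‖ ≤ C * M := by rw [norm_mul]; exact mul_le_mul hc hd (norm_nonneg _) hC
  rw [norm_mul]
  have e : ‖(1/2:ℝ)‖ = 1/2 := by rw [Real.norm_eq_abs]; norm_num
  rw [e]
  linarith [norm_sub_le (a*b) (c*d)]

noncomputable def signedArea (K : ℝ → ℝ × ℝ) : ℝ :=
  (1/2 : ℝ) * ∫ θ in (0:ℝ)..1,
    ((K θ).1 * deriv (fun t => (K t).2) θ - (K θ).2 * deriv (fun t => (K t).1) θ)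

theorem signed_area_preserved (F : ℝ × ℝ → ℝ × ℝ) (hF : ContDiff ℝ 1 F)
    (hdet : ∀ p : ℝ × ℝ, LinearMap.det ((fderiv ℝ F p) : (ℝ × ℝ) →ₗ[ℝ] (ℝ × ℝ)) = 1)
    (K : ℝ → ℝ × ℝ) (hK : ContDiff ℝ 1 K) (hper : ∀ θ : ℝ, K (θ + 1) = K θ) :
    signedArea (F ∘ K) = signedArea K := by
  classical
  have hKc : Continuous K := hK.continuous
  have hKder : ∀ θ, HasDerivAt K (deriv K θ) θ := fun θ => (hK.differentiable one_ne_zero θ).hasDerivAt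
  have hKdc : Continuous (deriv K) := hK.continuous_deriv le_rfl
  obtain ⟨R', hR'⟩ := ((isCompact_Icc (a:=(0:ℝ)) (b:=1)).image hKc).isBounded.subset_closedBall 0
  set R : ℝ := |R'| + 1 with hR
  have hKR : ∀ θ ∈ Set.Icc (0:ℝ) 1, ‖K θ‖ ≤ R - 1 := by
    intro θ hθ
    have := hR' (Set.mem_image_of_mem K hθ)
    rw [Metric.mem_closedBall, dist_zero_right] at this
    calc ‖K θ‖ ≤ R' := this
      _ ≤ |R'| := le_abs_self R'
      _ = R - 1 := by rw [hR]; ring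
  set χ : ContDiffBump ((0:ℝ×ℝ)) := ⟨R+1, R+2, by positivity, by linarith⟩ with hχ
  set FR : ℝ×ℝ → ℝ×ℝ := fun p => χ p • F p with hFRdef
  have hFRc1 : ContDiff ℝ 1 FR := (χ.contDiff).smul hF
  have hFRsupp : HasCompactSupport FR := χ.hasCompactSupport.smul_right
  have hFReq : ∀ p ∈ Metric.ball (0:ℝ×ℝ) (R+1), FR p = F p := by
    intro p hp
    rw [hFRdef]
    simp only
    rw [χ.one_of_mem_closedBall (Metric.ball_subset_closedBall hp), one_smul]
  have hFRfeq : ∀ p ∈ Metric.ball (0:ℝ×ℝ) (R+1), fderiv ℝ FR p = fderiv ℝ F p := by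
    intro p hp
    apply Filter.EventuallyEq.fderiv_eq
    filter_upwards [Metric.isOpen_ball.mem_nhds hp] with q hq using hFReq q hq
  have hdetR : ∀ p ∈ Metric.ball (0:ℝ×ℝ) (R+1),
      (fderiv ℝ FR p (1,0)).1 * (fderiv ℝ FR p (0,1)).2
        - (fderiv ℝ FR p (0,1)).1 * (fderiv ℝ FR p (1,0)).2 = 1 := by
    intro p hp
    rw [hFRfeq p hp]
    have := det_formula (fderiv ℝ F p)
    rw [hdet p] at this
    linarith
  obtain ⟨C₀, hC₀⟩ := hFRsupp.exists_bound_of_continuous hFRc1.continuous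
  have hDFRc : Continuous (fderiv ℝ FR) := hFRc1.continuous_fderiv one_ne_zero
  obtain ⟨C₁, hC₁⟩ := (hFRsupp.fderiv (𝕜 := ℝ)).exists_bound_of_continuous hDFRc
  have hC₀0 : 0 ≤ C₀ := (norm_nonneg _).trans (hC₀ 0)
  have hC₁0 : 0 ≤ C₁ := (norm_nonneg _).trans (hC₁ 0)
  set φ : ℕ → ContDiffBump ((0:ℝ×ℝ)) := fun n =>
    ⟨1/(n+1), 2/(n+1), by positivity, by gcongr <;> norm_num⟩ with hφdef
  have hφr : Tendsto (fun n => (φ n).rOut) atTop (𝓝 0) := by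
    have h2 : (fun n : ℕ => (φ n).rOut) = fun n : ℕ => 2 * (1/((n:ℝ)+1)) := by
      funext n; rw [hφdef]; simp; ring
    rw [h2]
    simpa using tendsto_const_nhds.mul (tendsto_one_div_add_atTop_nhds_zero_nat (𝕜 := ℝ))
  have hFRloc : LocallyIntegrable FR volume := hFRc1.continuous.locallyIntegrable
  set G : ℕ → ℝ×ℝ → ℝ×ℝ := fun n =>
    convolution ((φ n).normed volume) FR (ContinuousLinearMap.lsmul ℝ ℝ) volume with hGdef
  have hGsm : ∀ n, ContDiff ℝ (⊤:ℕ∞) (G n) := by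
    intro n
    show ContDiff ℝ (⊤:ℕ∞)
      (convolution ((φ n).normed volume) FR (ContinuousLinearMap.lsmul ℝ ℝ) volume)
    exact (φ n).hasCompactSupport_normed.contDiff_convolution_left _
      (φ n).contDiff_normed hFRloc
  have hGfd' : ∀ n (p v : ℝ×ℝ), fderiv ℝ (G n) p v
      = convolution ((φ n).normed volume) (fun a => fderiv ℝ FR a v)
          (ContinuousLinearMap.lsmul ℝ ℝ) volume p := by
    intro n p v
    have hd := hFRsupp.hasFDerivAt_convolution_right (ContinuousLinearMap.lsmul ℝ ℝ)
      (((φ n).integrable_normed (μ := volume)).locallyIntegrable) hFRc1 p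
    rw [hd.fderiv]
    exact convolution_precompR_apply _ (((φ n).integrable_normed (μ := volume)).locallyIntegrable)
      (hFRsupp.fderiv (𝕜 := ℝ)) hDFRc p v
  have hconv0 : ∀ p, Tendsto (fun n => G n p) atTop (𝓝 (FR p)) := fun p =>
    ContDiffBump.convolution_tendsto_right_of_continuous hφr hFRc1.continuous p
  have hconv1 : ∀ (v : ℝ×ℝ) p,
      Tendsto (fun n => fderiv ℝ (G n) p v) atTop (𝓝 (fderiv ℝ FR p v)) := by
    intro v p
    simp only [hGfd']
    exact ContDiffBump.convolution_tendsto_right_of_continuous hφr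
      (hDFRc.clm_apply continuous_const) p
  have hGb : ∀ n p, ‖G n p‖ ≤ C₀ := fun n p =>
    conv_norm_le _ _ hFRc1.continuous.aestronglyMeasurable _ hC₀ p
  have hGdb : ∀ n (p v : ℝ×ℝ), ‖fderiv ℝ (G n) p v‖ ≤ C₁ * ‖v‖ := by
    intro n p v
    rw [hGfd']
    apply conv_norm_le _ _ ((hDFRc.clm_apply continuous_const).aestronglyMeasurable)
    intro y
    exact (ContinuousLinearMap.le_opNorm _ v).trans
      (mul_le_mul_of_nonneg_right (hC₁ y) (norm_nonneg v))
  -- derivative identities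
  have e1 : ∀ θ, deriv (fun t => (K t).1) θ = (deriv K θ).1 := fun θ =>
    (((ContinuousLinearMap.fst ℝ ℝ ℝ).hasFDerivAt).comp_hasDerivAt θ (hKder θ)).deriv
  have e2 : ∀ θ, deriv (fun t => (K t).2) θ = (deriv K θ).2 := fun θ =>
    (((ContinuousLinearMap.snd ℝ ℝ ℝ).hasFDerivAt).comp_hasDerivAt θ (hKder θ)).deriv
  have hFKder : ∀ θ, HasDerivAt (fun t => F (K t)) (fderiv ℝ F (K θ) (deriv K θ)) θ := fun θ =>
    ((hF.differentiable one_ne_zero (K θ)).hasFDerivAt).comp_hasDerivAt θ (hKder θ)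
  have f1 : ∀ θ, deriv (fun t => (F (K t)).1) θ = (fderiv ℝ F (K θ) (deriv K θ)).1 := fun θ =>
    (((ContinuousLinearMap.fst ℝ ℝ ℝ).hasFDerivAt).comp_hasDerivAt θ (hFKder θ)).deriv
  have f2 : ∀ θ, deriv (fun t => (F (K t)).2) θ = (fderiv ℝ F (K θ) (deriv K θ)).2 := fun θ =>
    (((ContinuousLinearMap.snd ℝ ℝ ℝ).hasFDerivAt).comp_hasDerivAt θ (hFKder θ)).deriv
  -- membership facts
  have hball : ∀ θ ∈ Set.uIoc (0:ℝ) 1, K θ ∈ Metric.ball (0:ℝ×ℝ) (R+1) := by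
    intro θ hθ
    rw [Set.uIoc_of_le zero_le_one] at hθ
    have := hKR θ (Set.Ioc_subset_Icc_self hθ)
    rw [Metric.mem_ball, dist_zero_right]
    linarith
  have hballs : ∀ θ ∈ Set.uIoc (0:ℝ) 1, ∀ s ∈ Set.uIoc (0:ℝ) 1,
      s • K θ ∈ Metric.ball (0:ℝ×ℝ) (R+1) := by
    intro θ hθ s hs
    rw [Set.uIoc_of_le zero_le_one] at hθ hs
    have h1 := hKR θ (Set.Ioc_subset_Icc_self hθ)
    have h2 : ‖s • K θ‖ = |s| * ‖K θ‖ := by rw [norm_smul, Real.norm_eq_abs]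
    have h3 : |s| ≤ 1 := abs_le.mpr ⟨by linarith [hs.1], hs.2⟩
    rw [Metric.mem_ball, dist_zero_right, h2]
    have h4 : |s| * ‖K θ‖ ≤ 1 * (R - 1) :=
      mul_le_mul h3 h1 (norm_nonneg _) zero_le_one
    linarith
  -- norm of basis vectors
  have n10 : ‖((1:ℝ),(0:ℝ))‖ = 1 := by simp [Prod.norm_def]
  have n01 : ‖((0:ℝ),(1:ℝ))‖ = 1 := by simp [Prod.norm_def]
  have hent1 : ∀ n (p : ℝ×ℝ), ‖fderiv ℝ (G n) p (1,0)‖ ≤ C₁ := by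
    intro n p; have := hGdb n p (1,0); rwa [n10, mul_one] at this
  have hent2 : ∀ n (p : ℝ×ℝ), ‖fderiv ℝ (G n) p (0,1)‖ ≤ C₁ := by
    intro n p; have := hGdb n p (0,1); rwa [n01, mul_one] at this
  have hdb : ∀ n (p : ℝ×ℝ), ‖(fderiv ℝ (G n) p (1,0)).1 * (fderiv ℝ (G n) p (0,1)).2
      - (fderiv ℝ (G n) p (0,1)).1 * (fderiv ℝ (G n) p (1,0)).2‖ ≤ C₁*C₁ + C₁*C₁ := by
    intro n p
    have a1 : ‖(fderiv ℝ (G n) p (1,0)).1‖ ≤ C₁ := (norm_fst_le _).trans (hent1 n p)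
    have a2 : ‖(fderiv ℝ (G n) p (0,1)).2‖ ≤ C₁ := (norm_snd_le _).trans (hent2 n p)
    have a3 : ‖(fderiv ℝ (G n) p (0,1)).1‖ ≤ C₁ := (norm_fst_le _).trans (hent2 n p)
    have a4 : ‖(fderiv ℝ (G n) p (1,0)).2‖ ≤ C₁ := (norm_snd_le _).trans (hent1 n p)
    have m1 : ‖(fderiv ℝ (G n) p (1,0)).1 * (fderiv ℝ (G n) p (0,1)).2‖ ≤ C₁*C₁ := by
      rw [norm_mul]; exact mul_le_mul a1 a2 (norm_nonneg _) hC₁0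
    have m2 : ‖(fderiv ℝ (G n) p (0,1)).1 * (fderiv ℝ (G n) p (1,0)).2‖ ≤ C₁*C₁ := by
      rw [norm_mul]; exact mul_le_mul a3 a4 (norm_nonneg _) hC₁0
    linarith [norm_sub_le ((fderiv ℝ (G n) p (1,0)).1 * (fderiv ℝ (G n) p (0,1)).2)
      ((fderiv ℝ (G n) p (0,1)).1 * (fderiv ℝ (G n) p (1,0)).2)]
  have EQ := fun n => smooth_green (G n) (hGsm n) K hK hper
  have hGc : ∀ n, Continuous (G n) := fun n => (hGsm n).continuous
  have hGfc : ∀ n, Continuous (fderiv ℝ (G n)) := fun n => (hGsm n).continuous_fderiv (by simp)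
  -- LHS limit
  have hL : Tendsto (fun n => ∫ θ in (0:ℝ)..1,
        (1/2) * ((G n (K θ)).1 * (fderiv ℝ (G n) (K θ) (deriv K θ)).2
          - (G n (K θ)).2 * (fderiv ℝ (G n) (K θ) (deriv K θ)).1)) atTop
      (𝓝 (∫ θ in (0:ℝ)..1, (1/2) * ((F (K θ)).1 * (fderiv ℝ F (K θ) (deriv K θ)).2
          - (F (K θ)).2 * (fderiv ℝ F (K θ) (deriv K θ)).1))) := by
    apply intervalIntegral.tendsto_integral_filter_of_dominated_convergence
      (bound := fun θ => C₀ * (C₁ * ‖deriv K θ‖))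
    · refine Eventually.of_forall fun n => Continuous.aestronglyMeasurable ?_
      exact continuous_const.mul
        (((((hGc n).comp hKc).fst).mul ((((hGfc n).comp hKc).clm_apply hKdc).snd)).sub
          ((((hGc n).comp hKc).snd).mul ((((hGfc n).comp hKc).clm_apply hKdc).fst)))
    · refine Eventually.of_forall fun n => (ae_of_all _ fun θ hθ => ?_)
      apply half_bound
      · exact (norm_fst_le _).trans (hGb n _)
      · exact (norm_snd_le _).trans (hGdb n _ _)
      · exact (norm_snd_le _).trans (hGb n _)
      · exact (norm_fst_le _).trans (hGdb n _ _)
      · exact hC₀0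
    · exact (continuous_const.mul (continuous_const.mul hKdc.norm)).intervalIntegrable 0 1
    · refine ae_of_all _ fun θ hθ => ?_
      have hb := hball θ hθ
      rw [← hFReq _ hb, ← hFRfeq _ hb]
      exact tendsto_const_nhds.mul
        ((((continuous_fst.tendsto _).comp (hconv0 (K θ))).mul
            ((continuous_snd.tendsto _).comp (hconv1 (deriv K θ) (K θ)))).sub
          (((continuous_snd.tendsto _).comp (hconv0 (K θ))).mul
            ((continuous_fst.tendsto _).comp (hconv1 (deriv K θ) (K θ)))))
  -- inner integral limit
  have hinner : ∀ θ, θ ∈ Set.uIoc (0:ℝ) 1 →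
      Tendsto (fun n => ∫ s in (0:ℝ)..1,
          s * ((fderiv ℝ (G n) (s • K θ) (1,0)).1 * (fderiv ℝ (G n) (s • K θ) (0,1)).2
            - (fderiv ℝ (G n) (s • K θ) (0,1)).1 * (fderiv ℝ (G n) (s • K θ) (1,0)).2))
        atTop (𝓝 (1/2 : ℝ)) := by
    intro θ hθ
    have base : Tendsto (fun n => ∫ s in (0:ℝ)..1,
          s * ((fderiv ℝ (G n) (s • K θ) (1,0)).1 * (fderiv ℝ (G n) (s • K θ) (0,1)).2
            - (fderiv ℝ (G n) (s • K θ) (0,1)).1 * (fderiv ℝ (G n) (s • K θ) (1,0)).2))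
        atTop (𝓝 (∫ s in (0:ℝ)..1, s)) := by
      apply intervalIntegral.tendsto_integral_filter_of_dominated_convergence
        (bound := fun _ => C₁*C₁ + C₁*C₁)
      · refine Eventually.of_forall fun n => Continuous.aestronglyMeasurable ?_
        have hsc : Continuous fun s : ℝ => s • K θ := continuous_id.smul continuous_const
        exact continuous_id.mul
          (((((hGfc n).comp hsc).clm_apply continuous_const).fst.mul
              (((hGfc n).comp hsc).clm_apply continuous_const).snd).sub
            ((((hGfc n).comp hsc).clm_apply continuous_const).fst.mul
              (((hGfc n).comp hsc).clm_apply continuous_const).snd))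
      · refine Eventually.of_forall fun n => (ae_of_all _ fun s hs => ?_)
        rw [Set.uIoc_of_le zero_le_one] at hs
        have h3 : |s| ≤ 1 := abs_le.mpr ⟨by linarith [hs.1], hs.2⟩
        rw [norm_mul, Real.norm_eq_abs]
        calc |s| * ‖_‖ ≤ 1 * (C₁*C₁ + C₁*C₁) :=
              mul_le_mul h3 (hdb n _) (norm_nonneg _) zero_le_one
          _ = C₁*C₁ + C₁*C₁ := one_mul _
      · exact intervalIntegrable_const
      · refine ae_of_all _ fun s hs => ?_
        have hb := hballs θ hθ s hs
        have tt : Tendsto (fun n =>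
            s * ((fderiv ℝ (G n) (s • K θ) (1,0)).1 * (fderiv ℝ (G n) (s • K θ) (0,1)).2
              - (fderiv ℝ (G n) (s • K θ) (0,1)).1 * (fderiv ℝ (G n) (s • K θ) (1,0)).2))
            atTop (𝓝 (s * ((fderiv ℝ FR (s • K θ) (1,0)).1 * (fderiv ℝ FR (s • K θ) (0,1)).2
              - (fderiv ℝ FR (s • K θ) (0,1)).1 * (fderiv ℝ FR (s • K θ) (1,0)).2))) :=
          tendsto_const_nhds.mul
            ((((continuous_fst.tendsto _).comp (hconv1 (1,0) (s • K θ))).mul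
                ((continuous_snd.tendsto _).comp (hconv1 (0,1) (s • K θ)))).sub
              (((continuous_fst.tendsto _).comp (hconv1 (0,1) (s • K θ))).mul
                ((continuous_snd.tendsto _).comp (hconv1 (1,0) (s • K θ)))))
        rwa [hdetR _ hb, mul_one] at tt
    have hval : (∫ s in (0:ℝ)..1, s) = (1/2 : ℝ) := by
      rw [integral_id]; norm_num
    rwa [hval] at base
  -- RHS limit
  set cross : ℝ → ℝ := fun θ => (K θ).1 * (deriv K θ).2 - (K θ).2 * (deriv K θ).1 with hcross
  have hcrossc : Continuous cross := (hKc.fst.mul hKdc.snd).sub (hKc.snd.mul hKdc.fst)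
  have hinb : ∀ n θ, ‖∫ s in (0:ℝ)..1,
      s * ((fderiv ℝ (G n) (s • K θ) (1,0)).1 * (fderiv ℝ (G n) (s • K θ) (0,1)).2
        - (fderiv ℝ (G n) (s • K θ) (0,1)).1 * (fderiv ℝ (G n) (s • K θ) (1,0)).2)‖
      ≤ C₁*C₁ + C₁*C₁ := by
    intro n θ
    have := intervalIntegral.norm_integral_le_of_norm_le_const (C := C₁*C₁ + C₁*C₁)
      (a := (0:ℝ)) (b := 1) (f := fun s =>
        s * ((fderiv ℝ (G n) (s • K θ) (1,0)).1 * (fderiv ℝ (G n) (s • K θ) (0,1)).2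
        - (fderiv ℝ (G n) (s • K θ) (0,1)).1 * (fderiv ℝ (G n) (s • K θ) (1,0)).2)) ?_
    · simpa using this
    · intro s hs
      rw [Set.uIoc_of_le zero_le_one] at hs
      have h3 : |s| ≤ 1 := abs_le.mpr ⟨by linarith [hs.1], hs.2⟩
      rw [norm_mul, Real.norm_eq_abs]
      calc |s| * ‖_‖ ≤ 1 * (C₁*C₁ + C₁*C₁) :=
            mul_le_mul h3 (hdb n _) (norm_nonneg _) zero_le_one
        _ = C₁*C₁ + C₁*C₁ := one_mul _
  have hR : Tendsto (fun n => ∫ θ in (0:ℝ)..1,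
        (∫ s in (0:ℝ)..1,
          s * ((fderiv ℝ (G n) (s • K θ) (1,0)).1 * (fderiv ℝ (G n) (s • K θ) (0,1)).2
            - (fderiv ℝ (G n) (s • K θ) (0,1)).1 * (fderiv ℝ (G n) (s • K θ) (1,0)).2))
          * ((K θ).1 * (deriv K θ).2 - (K θ).2 * (deriv K θ).1)) atTop
      (𝓝 (∫ θ in (0:ℝ)..1, (1/2) * cross θ)) := by
    apply intervalIntegral.tendsto_integral_filter_of_dominated_convergence
      (bound := fun θ => (C₁*C₁ + C₁*C₁) * ‖cross θ‖)
    · refine Eventually.of_forall fun n => Continuous.aestronglyMeasurable ?_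
      apply Continuous.mul _ hcrossc
      apply intervalIntegral.continuous_parametric_intervalIntegral_of_continuous'
      have hsc : Continuous fun z : ℝ × ℝ => z.2 • K z.1 :=
        continuous_snd.smul (hKc.comp continuous_fst)
      exact continuous_snd.mul
        (((((hGfc n).comp hsc).clm_apply continuous_const).fst.mul
            (((hGfc n).comp hsc).clm_apply continuous_const).snd).sub
          ((((hGfc n).comp hsc).clm_apply continuous_const).fst.mul
            (((hGfc n).comp hsc).clm_apply continuous_const).snd))
    · refine Eventually.of_forall fun n => (ae_of_all _ fun θ hθ => ?_)
      rw [norm_mul]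
      exact mul_le_mul_of_nonneg_right (hinb n θ) (norm_nonneg _)
    · exact (continuous_const.mul hcrossc.norm).intervalIntegrable 0 1
    · refine ae_of_all _ fun θ hθ => ?_
      exact (hinner θ hθ).mul tendsto_const_nhds
  -- combine
  rw [funext EQ] at hL
  have main := tendsto_nhds_unique hL hR
  have SA1 : signedArea (F ∘ K) = ∫ θ in (0:ℝ)..1,
      (1/2) * ((F (K θ)).1 * (fderiv ℝ F (K θ) (deriv K θ)).2
        - (F (K θ)).2 * (fderiv ℝ F (K θ) (deriv K θ)).1) := by
    rw [signedArea, ← intervalIntegral.integral_const_mul]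
    apply intervalIntegral.integral_congr
    intro θ _
    simp only [Function.comp_apply, Function.comp_def, f1, f2]
  have SA2 : signedArea K = ∫ θ in (0:ℝ)..1, (1/2) * cross θ := by
    rw [signedArea, ← intervalIntegral.integral_const_mul]
    apply intervalIntegral.integral_congr
    intro θ _
    simp only [hcross, e1, e2]
  rw [SA1, SA2, main]
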